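/- There is an isomorphism of BV-algebras between HH^*(R[Z];R[Z]) with Δ given by the unit t⁻¹ (so Δ(y^r x^i) = r(i−1)x^{i−1} on R[x,x⁻¹]⊗Λ(y), |x|=0, |y|=1) and the loop homology BV-algebra H_*(LS¹;R) ≅ R[x,x⁻¹]⊗Λ(z) with |x|=0, |z|=−1 (regraded) and Δ(z x^i) = i x^i, Δ(x^i) = 0; the isomorphism sends x ↦ x and z ↦ yx. -/

import Mathlib

open LaurentPolynomial TrivSqZeroExt

noncomputable section

/-- The graded algebra `R[x,x⁻¹] ⊗ Λ(y)` underlying both `HH^*(R[ℤ];R[ℤ])` and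
`H_*(LS¹;R)`, modelled as the trivial square-zero extension (dual numbers) of the
Laurent polynomial ring: `inl p` is the even part (polynomial in `x, x⁻¹`), and
`inr q` is the odd part (`q·y`, resp. `q·z`). -/
abbrev LoopHH (R : Type) [CommRing R] : Type :=
  DualNumber (LaurentPolynomial R)

/-
STATEMENT 18: There is an isomorphism of BV-algebras between HH^*(R[ℤ];R[ℤ]) with Δ
given by the unit t⁻¹ (so Δ(y^r x^i) = r(i−1)x^{i−1} on R[x,x⁻¹]⊗Λ(y), |x|=0, |y|=1)
and the loop homology BV-algebra H_*(LS¹;R) ≅ R[x,x⁻¹]⊗Λ(z) with |x|=0, |z|=−1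
(regraded) and Δ(z x^i) = i x^i, Δ(x^i) = 0; the isomorphism sends x ↦ x and z ↦ yx.
-/
/-- The algebra automorphism of `LoopHH R` fixing the even part and multiplying the
odd part by `T 1`, i.e. `x ↦ x`, `z ↦ y·x`. -/
def ψ (R : Type) [CommRing R] : LoopHH R ≃ₐ[R] LoopHH R where
  toFun a := (a.fst, T 1 * a.snd)
  invFun a := (a.fst, T (-1) * a.snd)
  left_inv a := by
    ext <;> simp [← mul_assoc, ← T_add]
  right_inv a := by
    ext <;> simp [← mul_assoc, ← T_add]
  map_mul' a b := by
    refine TrivSqZeroExt.ext ?_ ?_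
    · rfl
    · simp only [snd_mul, fst_mul, fst_mk, snd_mk, smul_eq_mul, MulOpposite.smul_eq_mul_unop,
        MulOpposite.unop_op]
      show T 1 * (fst a * snd b + snd a * fst b)
          = fst a * (T 1 * snd b) + T 1 * snd a * fst b
      ring
  map_add' a b := by exact TrivSqZeroExt.ext rfl (mul_add _ _ _)
  commutes' r := by
    refine TrivSqZeroExt.ext ?_ ?_ <;>
      simp [TrivSqZeroExt.algebraMap_eq_inl']

theorem loop_homology_iso_hochschild_cohomology_BV
    (R : Type) [CommRing R]
    (Δhh Δloop : LoopHH R →ₗ[R] LoopHH R)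
    -- the BV-operator of H_*(LS¹;R):  Δ(x^i) = 0,  Δ(z x^i) = i x^i
    (hloop0 : ∀ i : ℤ, Δloop (inl (T i)) = 0)
    (hloop1 : ∀ i : ℤ, Δloop (inr (T i)) = (i : ℤ) • inl (T i))
    -- the BV-operator Δ_{t⁻¹} of HH^*(R[ℤ];R[ℤ]):  Δ(x^i) = 0,  Δ(y x^i) = (i−1) x^{i−1}
    (hhh0 : ∀ i : ℤ, Δhh (inl (T i)) = 0)
    (hhh1 : ∀ i : ℤ, Δhh (inr (T i)) = ((i : ℤ) - 1) • inl (T (i - 1))) :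
    ∃ φ : LoopHH R ≃ₐ[R] LoopHH R,
      φ (inl (T 1)) = inl (T 1) ∧
      φ (inr 1) = inr (T 1) ∧
      ∀ c : LoopHH R, φ (Δloop c) = Δhh (φ c) := by
  refine ⟨ψ R, ?_, ?_, ?_⟩
  · exact TrivSqZeroExt.ext rfl (mul_zero _)
  · exact TrivSqZeroExt.ext rfl (mul_one _)
  · have hψ : ∀ p : LaurentPolynomial R, (ψ R) (inl p) = inl p := fun p => by
      exact TrivSqZeroExt.ext rfl (mul_zero _)
    have hψ' : ∀ p : LaurentPolynomial R, (ψ R) (inr p) = inr (T 1 * p) := fun p => rfl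
    have hsm : ∀ (r : R) (x : LoopHH R), (ψ R) (r • x) = r • (ψ R) x := fun r x =>
      (ψ R).toLinearMap.map_smul r x
    have h1 : ∀ p : LaurentPolynomial R,
        (ψ R) (Δloop (inl p)) = Δhh ((ψ R) (inl p)) := by
      intro p
      induction p using LaurentPolynomial.induction_on' with
      | add p q hp hq =>
        rw [inl_add, map_add, map_add, map_add, map_add, hp, hq]
      | C_mul_T n a =>
        rw [hψ, C_eq_algebraMap, ← Algebra.smul_def, inl_smul, LinearMap.map_smul,
          LinearMap.map_smul, hloop0, hhh0, smul_zero]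
        exact map_zero _
    have h2 : ∀ p : LaurentPolynomial R,
        (ψ R) (Δloop (inr p)) = Δhh ((ψ R) (inr p)) := by
      intro p
      induction p using LaurentPolynomial.induction_on' with
      | add p q hp hq =>
        rw [inr_add, map_add, map_add, map_add, map_add, hp, hq]
      | C_mul_T n a =>
        have hT : T 1 * ((a • T n : LaurentPolynomial R)) = a • T (n + 1) := by
          rw [mul_smul_comm, ← T_add, add_comm]
        rw [hψ', C_eq_algebraMap, ← Algebra.smul_def, hT, inr_smul, inr_smul,
          LinearMap.map_smul, LinearMap.map_smul, hloop1, hhh1, hsm, map_zsmul, hψ,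
          add_sub_cancel_right]
    intro c
    rw [← inl_fst_add_inr_snd_eq c, map_add, map_add, map_add, map_add, h1, h2]

end
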